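/- arXiv:1709.04161 — 2 statements merged into one kernel-verified Lean document; each statement's English description precedes it below -/
import Mathlib

section
/- Let m ≥ 1, let x : Fin m → ℕ satisfy x j ≥ 1 for all j, and let z : ℕ satisfy ∑ j, x j = 2·z. Consider the m+1 jobs indexed by Fin m ⊕ Unit with processing times p (inl j) = x j and p (inr) = 1. Then there exists a subset S ⊆ Fin m with ∑_{j ∈ S} x j = z if and only if there exists a schedule σ of these m+1 jobs such that ∑ j, x j · C (inl j) ≤ z + ∑ i, ∑_{j ≤ i} x i · x j and C (inr) = z + 1. -/
open Finset in
private lemma double_sum_pairs {m : ℕ} (x : Fin m → ℕ) {α : Type*} [LinearOrder α]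
    (f : Fin m → α) (hf : Function.Injective f) :
    2 * ∑ i, ∑ j ∈ univ.filter (fun j => f j ≤ f i), x i * x j
      = (∑ i, x i) * (∑ i, x i) + ∑ i, x i * x i := by
  have key : ∀ i j : Fin m,
      (if f j ≤ f i then x i * x j else 0) + (if f i ≤ f j then x i * x j else 0)
        = x i * x j + (if i = j then x i * x j else 0) := by
    intro i j
    rcases lt_trichotomy (f i) (f j) with h1 | h1 | h1
    · have hne : i ≠ j := fun e => absurd (congrArg f e) h1.ne
      simp [not_le.mpr h1, h1.le, hne]
    · have e : i = j := hf h1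
      simp [e]
    · have hne : i ≠ j := fun e => absurd (congrArg f e) h1.ne'
      simp [not_le.mpr h1, h1.le, hne]
  have swap : ∑ i, ∑ j ∈ univ.filter (fun j => f j ≤ f i), x i * x j
      = ∑ i, ∑ j : Fin m, if f i ≤ f j then x i * x j else 0 := by
    simp only [sum_filter]
    rw [Finset.sum_comm]
    congr 1; ext i; congr 1; ext j
    rw [mul_comm]
  calc 2 * ∑ i, ∑ j ∈ univ.filter (fun j => f j ≤ f i), x i * x j
      = (∑ i, ∑ j : Fin m, if f j ≤ f i then x i * x j else 0)
        + (∑ i, ∑ j : Fin m, if f i ≤ f j then x i * x j else 0) := by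
        rw [two_mul]
        nth_rewrite 2 [swap]
        simp [sum_filter]
    _ = ∑ i, ∑ j : Fin m, (x i * x j + if i = j then x i * x j else 0) := by
        rw [← Finset.sum_add_distrib]
        congr 1; ext i
        rw [← Finset.sum_add_distrib]
        exact Finset.sum_congr rfl (fun j _ => key i j)
    _ = (∑ i, x i) * (∑ i, x i) + ∑ i, x i * x i := by
        simp [Finset.sum_add_distrib, ← Finset.mul_sum, ← Finset.sum_mul, Finset.sum_ite_eq']

open Finset in
private lemma sum_pairs_eq {m : ℕ} (x : Fin m → ℕ) {α : Type*} [LinearOrder α]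
    (f : Fin m → α) (hf : Function.Injective f) :
    ∑ i, ∑ j ∈ univ.filter (fun j => f j ≤ f i), x i * x j
      = ∑ i, ∑ j ∈ Finset.Iic i, x i * x j := by
  have hB : ∑ i, ∑ j ∈ Finset.Iic i, x i * x j
      = ∑ i, ∑ j ∈ univ.filter (fun j => (id j : Fin m) ≤ id i), x i * x j := by
    congr 1; ext i; congr 1; ext j; simp
  rw [hB]
  have h1 := double_sum_pairs x f hf
  have h2 := double_sum_pairs x (id : Fin m → Fin m) Function.injective_id
  omega

/-- The completion time of job `i` in the schedule `σ` (a bijection from jobs to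
positions) with processing times `p`: the sum of processing times of all jobs
scheduled at position at most the position of `i`. -/
def completionTime {ι : Type*} [Fintype ι] (p : ι → ℕ)
    (σ : ι ≃ Fin (Fintype.card ι)) (i : ι) : ℕ :=
  ∑ j ∈ Finset.univ.filter (fun j => σ j ≤ σ i), p j

open Finset in
private lemma wsum_decomp {m : ℕ} (x : Fin m → ℕ)
    (σ : (Fin m ⊕ Unit) ≃ Fin (Fintype.card (Fin m ⊕ Unit))) :
    ∑ i, x i * completionTime (Sum.elim x fun _ => 1) σ (Sum.inl i)
      = (∑ i, ∑ j ∈ univ.filter (fun j => σ (Sum.inl j) ≤ σ (Sum.inl i)), x i * x j)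
        + ∑ i ∈ univ.filter (fun i => σ (Sum.inr ()) ≤ σ (Sum.inl i)), x i := by
  unfold completionTime
  simp only [sum_filter, Fintype.sum_sum_type, Sum.elim_inl, Sum.elim_inr,
    mul_add, Finset.mul_sum, mul_ite, mul_one, mul_zero]
  rw [Finset.sum_add_distrib]
  simp

open Finset in
private lemma unit_decomp {m : ℕ} (x : Fin m → ℕ)
    (σ : (Fin m ⊕ Unit) ≃ Fin (Fintype.card (Fin m ⊕ Unit))) :
    completionTime (Sum.elim x fun _ => 1) σ (Sum.inr ())
      = (∑ i ∈ univ.filter (fun i => σ (Sum.inl i) ≤ σ (Sum.inr ())), x i) + 1 := by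
  unfold completionTime
  simp [sum_filter, Fintype.sum_sum_type]

open Finset in
private lemma TU_split {m : ℕ} (x : Fin m → ℕ)
    (σ : (Fin m ⊕ Unit) ≃ Fin (Fintype.card (Fin m ⊕ Unit))) :
    (∑ i ∈ univ.filter (fun i => σ (Sum.inr ()) ≤ σ (Sum.inl i)), x i)
      + (∑ i ∈ univ.filter (fun i => σ (Sum.inl i) ≤ σ (Sum.inr ())), x i)
      = ∑ i, x i := by
  rw [← Finset.sum_filter_add_sum_filter_not univ (fun i => σ (Sum.inr ()) ≤ σ (Sum.inl i)) x]
  congr 2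
  ext i
  simp only [mem_filter, mem_univ, true_and, not_le]
  constructor
  · intro h
    exact lt_of_le_of_ne h (fun e => absurd (σ.injective e) (by simp))
  · exact le_of_lt

open Finset in
private lemma exists_schedule {m : ℕ} (S : Finset (Fin m)) :
    ∃ σ : (Fin m ⊕ Unit) ≃ Fin (Fintype.card (Fin m ⊕ Unit)),
      univ.filter (fun i => σ (Sum.inl i) ≤ σ (Sum.inr ())) = S := by
  classical
  set k := S.card with hkdef
  have hk : k ≤ m := by
    simpa using Finset.card_le_card (Finset.subset_univ S)
  have hcard : k + (1 + (m - k)) = Fintype.card (Fin m ⊕ Unit) := by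
    simp; omega
  let eA : {i // i ∈ S} ≃ Fin k := S.equivFin
  let eB : {i // i ∉ S} ≃ Fin (m - k) := Fintype.equivFinOfCardEq (by
    simp [Fintype.card_subtype_compl, hkdef])
  let eU : Unit ≃ Fin 1 := Fintype.equivFinOfCardEq (by simp)
  let e : (Fin m ⊕ Unit) ≃ Fin (k + (1 + (m - k))) :=
    ((Equiv.sumCongr (Equiv.sumCompl (· ∈ S)).symm (Equiv.refl Unit)).trans <|
      (Equiv.sumAssoc _ _ _).trans <|
      (Equiv.sumCongr (Equiv.refl _) (Equiv.sumComm _ _)).trans <|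
      (Equiv.sumCongr eA (Equiv.sumCongr eU eB)).trans <|
      (Equiv.sumCongr (Equiv.refl _) finSumFinEquiv).trans finSumFinEquiv)
  refine ⟨e.trans (finCongr hcard), ?_⟩
  have hunit : ((e.trans (finCongr hcard)) (Sum.inr ())).val = k := by
    simp only [e, Equiv.trans_apply, Equiv.sumCongr_apply, Sum.map_inr, Equiv.refl_apply,
      Equiv.sumAssoc_apply_inr, Sum.map_inl, Equiv.sumComm_apply, Sum.swap_inr,
      finSumFinEquiv_apply_left, finSumFinEquiv_apply_right, finCongr_apply, Fin.coe_cast]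
    simp [Fin.natAdd, Fin.castAdd, Fin.castLE]
  have hmem : ∀ i ∈ S, ((e.trans (finCongr hcard)) (Sum.inl i)).val < k := by
    intro i hi
    simp only [e, Equiv.trans_apply, Equiv.sumCongr_apply, Sum.map_inl, Equiv.refl_apply]
    rw [Equiv.sumCompl_symm_apply_of_pos hi]
    simp [Fin.castAdd, Fin.castLE]
  have hnot : ∀ i ∉ S, k < ((e.trans (finCongr hcard)) (Sum.inl i)).val := by
    intro i hi
    simp only [e, Equiv.trans_apply, Equiv.sumCongr_apply, Sum.map_inl, Equiv.refl_apply]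
    rw [Equiv.sumCompl_symm_apply_of_neg hi]
    simp [Fin.natAdd]
  ext i
  simp only [mem_filter, mem_univ, true_and]
  constructor
  · intro h
    by_contra hi
    have := hnot i hi
    rw [Fin.le_def] at h
    omega
  · intro hi
    have := hmem i hi
    rw [Fin.le_def]
    omega

/-- Correctness of the Partition reduction for
`1 | ∑ w_j C_j^{(1)} ≤ A₁, ∑ E_j^{(2)} ≥ A₂ |` with a single agent-2 job. -/
theorem partition_reduction_jit_completion
    (m : ℕ) (hm : 1 ≤ m) (x : Fin m → ℕ) (hx : ∀ j, 1 ≤ x j)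
    (z : ℕ) (hsum : ∑ j, x j = 2 * z) :
    (∃ S : Finset (Fin m), ∑ j ∈ S, x j = z) ↔
    (∃ σ : (Fin m ⊕ Unit) ≃ Fin (Fintype.card (Fin m ⊕ Unit)),
      (∑ i, x i * completionTime (Sum.elim x fun _ => 1) σ (Sum.inl i)
          ≤ z + ∑ i, ∑ j ∈ Finset.Iic i, x i * x j) ∧
      completionTime (Sum.elim x fun _ => 1) σ (Sum.inr ()) = z + 1) := by
  constructor
  · rintro ⟨S, hS⟩
    obtain ⟨σ, hσ⟩ := exists_schedule S
    have hinj : Function.Injective (fun i : Fin m => σ (Sum.inl i)) :=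
      fun a b h => Sum.inl_injective (σ.injective h)
    have hU : (∑ i ∈ Finset.univ.filter
        (fun i => σ (Sum.inl i) ≤ σ (Sum.inr ())), x i) = z := by
      rw [hσ]; exact hS
    have hT : (∑ i ∈ Finset.univ.filter
        (fun i => σ (Sum.inr ()) ≤ σ (Sum.inl i)), x i) = z := by
      have := TU_split x σ
      omega
    refine ⟨σ, ?_, ?_⟩
    · rw [wsum_decomp, sum_pairs_eq x (fun i => σ (Sum.inl i)) hinj, hT]
      omega
    · rw [unit_decomp, hU]
  · rintro ⟨σ, _, h2⟩
    refine ⟨Finset.univ.filter (fun i => σ (Sum.inl i) ≤ σ (Sum.inr ())), ?_⟩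
    have := unit_decomp x σ
    omega
end

section
/- Let the agent-1 jobs have positive processing times p₁ : Fin n → ℕ, due dates d₁ : Fin n → ℕ, and weights w₁ : Fin n → ℕ, and let the agent-2 jobs have positive processing times p₂ : Fin k → ℕ, due dates d₂ : Fin k → ℕ, and weights w₂ : Fin k → ℕ; let A₁, A₂ : ℕ. If there exists a timed schedule with ∑ over just-in-time agent-1 jobs i of w₁ i ≥ A₁ and ∑ over tardy agent-2 jobs j of w₂ j ≤ A₂, then there exists such a timed schedule (satisfying both bounds) in which every agent-1 job that is not just-in-time and every tardy agent-2 job starts after the completion time of every just-in-time agent-1 job and of every early agent-2 job. -/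
/-- A timed schedule: a start-time function whose half-open execution intervals
`(s i, s i + p i]` are pairwise disjoint. -/
def IsTimedSchedule {ι : Type*} (p : ι → ℕ) (s : ι → ℕ) : Prop :=
  ∀ i j, i ≠ j →
    Disjoint (Set.Ioc (s i) (s i + p i)) (Set.Ioc (s j) (s j + p j))

lemma Ioc_disj_of_le {a b c d : ℕ} (h : b ≤ c) :
    Disjoint (Set.Ioc a b) (Set.Ioc c d) := by
  apply Set.disjoint_left.2
  rintro z ⟨_, h2⟩ ⟨h3, _⟩
  omega

/-- Structural part of Lemma 11 for
`1 | ∑ w_j^{(1)} E_j^{(1)} ≥ A₁, ∑ w_j^{(2)} U_j^{(2)} ≤ A₂ |`: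
if a timed schedule exists with just-in-time agent-1 weight at least `A₁` and
tardy agent-2 weight at most `A₂`, then one exists (meeting both bounds) in
which every non-just-in-time agent-1 job and every tardy agent-2 job starts
after the completion of every just-in-time agent-1 job and of every early
agent-2 job. -/
theorem jit_tardy_structural_lemma
    (n k : ℕ) (p₁ d₁ w₁ : Fin n → ℕ) (p₂ d₂ w₂ : Fin k → ℕ)
    (hp₁ : ∀ i, 0 < p₁ i) (hp₂ : ∀ j, 0 < p₂ j) (A₁ A₂ : ℕ)
    (h : ∃ s : Fin n ⊕ Fin k → ℕ, IsTimedSchedule (Sum.elim p₁ p₂) s ∧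
      A₁ ≤ (∑ i ∈ Finset.univ.filter
        (fun i : Fin n => s (Sum.inl i) + p₁ i = d₁ i), w₁ i) ∧
      (∑ j ∈ Finset.univ.filter
        (fun j : Fin k => d₂ j < s (Sum.inr j) + p₂ j), w₂ j) ≤ A₂) :
    ∃ s : Fin n ⊕ Fin k → ℕ, IsTimedSchedule (Sum.elim p₁ p₂) s ∧
      A₁ ≤ (∑ i ∈ Finset.univ.filter
        (fun i : Fin n => s (Sum.inl i) + p₁ i = d₁ i), w₁ i) ∧
      (∑ j ∈ Finset.univ.filter
        (fun j : Fin k => d₂ j < s (Sum.inr j) + p₂ j), w₂ j) ≤ A₂ ∧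
      -- every non-JIT agent-1 job starts after every JIT agent-1 job and
      -- every early agent-2 job
      (∀ i : Fin n, s (Sum.inl i) + p₁ i ≠ d₁ i →
        (∀ i' : Fin n, s (Sum.inl i') + p₁ i' = d₁ i' →
          s (Sum.inl i') + p₁ i' ≤ s (Sum.inl i)) ∧
        (∀ j' : Fin k, s (Sum.inr j') + p₂ j' ≤ d₂ j' →
          s (Sum.inr j') + p₂ j' ≤ s (Sum.inl i))) ∧
      -- every tardy agent-2 job starts after every JIT agent-1 job and
      -- every early agent-2 job
      (∀ j : Fin k, d₂ j < s (Sum.inr j) + p₂ j →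
        (∀ i' : Fin n, s (Sum.inl i') + p₁ i' = d₁ i' →
          s (Sum.inl i') + p₁ i' ≤ s (Sum.inr j)) ∧
        (∀ j' : Fin k, s (Sum.inr j') + p₂ j' ≤ d₂ j' →
          s (Sum.inr j') + p₂ j' ≤ s (Sum.inr j))) := by
  classical
  obtain ⟨s, hsch, hA1, hA2⟩ := h
  set q : Fin n ⊕ Fin k → ℕ := Sum.elim p₁ p₂ with hq
  set T : ℕ := Finset.univ.sup (fun x => s x + q x) with hT
  set M : ℕ := Finset.univ.sup q with hM
  have hCT : ∀ x, s x + q x ≤ T := fun x => Finset.le_sup (f := fun x => s x + q x) (Finset.mem_univ x)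
  have hqM : ∀ x, q x ≤ M := fun x => Finset.le_sup (f := q) (Finset.mem_univ x)
  set moved : Fin n ⊕ Fin k → Prop := fun x =>
    Sum.elim (fun i => s (Sum.inl i) + p₁ i ≠ d₁ i)
      (fun j => d₂ j < s (Sum.inr j) + p₂ j) x with hmoved
  set idx : Fin n ⊕ Fin k → ℕ := Sum.elim (fun i => (i : ℕ)) (fun j => n + (j : ℕ)) with hidx
  set base : Fin n ⊕ Fin k → ℕ := fun x => T + idx x * (M + 1) with hbase
  set s' : Fin n ⊕ Fin k → ℕ := fun x =>
    if moved x then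
      Sum.elim (fun i => base (Sum.inl i) +
          (if base (Sum.inl i) + p₁ i = d₁ i then 1 else 0))
        (fun j => base (Sum.inr j)) x
    else s x with hs'
  -- basic facts
  have hnm : ∀ x, ¬ moved x → s' x = s x := by
    intro x hx; simp only [hs', if_neg hx]
  have hmv : ∀ x, moved x → base x ≤ s' x ∧ s' x + q x ≤ base x + (M + 1) := by
    intro x hx
    have := hqM x
    simp only [hs', if_pos hx]
    rcases x with i | j
    · simp only [Sum.elim_inl, hq] at this ⊢
      split_ifs <;> omega
    · simp only [Sum.elim_inr, hq] at this ⊢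
      omega
  have hmvT : ∀ x, moved x → T ≤ s' x := by
    intro x hx
    have := (hmv x hx).1
    simp only [hbase] at this
    omega
  have hidxinj : ∀ x y : Fin n ⊕ Fin k, x ≠ y → idx x ≠ idx y := by
    rintro (i | i) (j | j) hne heq <;>
      simp only [hidx, Sum.elim_inl, Sum.elim_inr] at heq
    · exact hne (congrArg Sum.inl (Fin.ext heq))
    · omega
    · omega
    · exact hne (congrArg Sum.inr (Fin.ext (by omega)))
  -- new JIT / tardy characterization
  have hjit : ∀ i : Fin n, (s' (Sum.inl i) + p₁ i = d₁ i) ↔ (s (Sum.inl i) + p₁ i = d₁ i) := by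
    intro i
    by_cases hx : moved (Sum.inl i)
    · have hxi : s (Sum.inl i) + p₁ i ≠ d₁ i := hx
      simp only [hs', if_pos hx, Sum.elim_inl]
      split_ifs with hc <;> constructor <;> intro h' <;> omega
    · rw [hnm _ hx]
  have htardy : ∀ j : Fin k, (d₂ j < s' (Sum.inr j) + p₂ j) ↔ (d₂ j < s (Sum.inr j) + p₂ j) := by
    intro j
    by_cases hx : moved (Sum.inr j)
    · have hxj : d₂ j < s (Sum.inr j) + p₂ j := hx
      have h1 := hmvT _ hx
      have h2 := hCT (Sum.inr j)
      simp only [hq, Sum.elim_inr] at h2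
      constructor <;> intro h' <;> omega
    · rw [hnm _ hx]
  refine ⟨s', ?_, ?_, ?_, ?_, ?_⟩
  · -- timed schedule
    intro x y hxy
    by_cases hx : moved x <;> by_cases hy : moved y
    · -- both moved
      rcases Nat.lt_or_ge (idx x) (idx y) with hlt | hge
      · apply Ioc_disj_of_le
        have h1 := (hmv x hx).2
        have h2 := (hmv y hy).1
        simp only [hbase] at h1 h2
        have : T + idx x * (M + 1) + (M + 1) ≤ T + idx y * (M + 1) := by
          have : idx x + 1 ≤ idx y := hlt
          nlinarith
        omega
      · have hlt : idx y < idx x := lt_of_le_of_ne hge (Ne.symm (hidxinj x y hxy))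
        apply (Ioc_disj_of_le ?_).symm
        have h1 := (hmv y hy).2
        have h2 := (hmv x hx).1
        simp only [hbase] at h1 h2
        have : T + idx y * (M + 1) + (M + 1) ≤ T + idx x * (M + 1) := by
          have : idx y + 1 ≤ idx x := hlt
          nlinarith
        omega
    · -- x moved, y not
      apply (Ioc_disj_of_le ?_).symm
      rw [hnm y hy]
      exact le_trans (hCT y) (hmvT x hx)
    · apply Ioc_disj_of_le
      rw [hnm x hx]
      exact le_trans (hCT x) (hmvT y hy)
    · rw [hnm x hx, hnm y hy]
      exact hsch x y hxy
  · -- A₁ bound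
    refine le_trans hA1 (le_of_eq ?_)
    apply Finset.sum_congr _ (fun _ _ => rfl)
    apply Finset.filter_congr
    intro i _
    simp only [hjit i]
  · refine le_trans (le_of_eq ?_) hA2
    apply Finset.sum_congr _ (fun _ _ => rfl)
    apply Finset.filter_congr
    intro j _
    simp only [htardy j]
  · -- structural agent 1
    intro i hi
    have hx : moved (Sum.inl i) := by
      by_contra hc
      have hnc : s (Sum.inl i) + p₁ i = d₁ i := not_not.1 hc
      exact hi ((hjit i).2 hnc)
    have hTi := hmvT _ hx
    constructor
    · intro i' hi'
      have hnmi' : ¬ moved (Sum.inl i') := by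
        intro hc; exact hc ((hjit i').1 hi')
      rw [hnm _ hnmi'] at hi' ⊢
      have := hCT (Sum.inl i')
      simp only [hq, Sum.elim_inl] at this
      omega
    · intro j' hj'
      have hnmj' : ¬ moved (Sum.inr j') := by
        intro hc
        have : d₂ j' < s' (Sum.inr j') + p₂ j' := (htardy j').2 hc
        omega
      rw [hnm _ hnmj'] at hj' ⊢
      have := hCT (Sum.inr j')
      simp only [hq, Sum.elim_inr] at this
      omega
  · -- structural agent 2
    intro j hj
    have hx : moved (Sum.inr j) := (htardy j).1 hj
    have hTj := hmvT _ hx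
    constructor
    · intro i' hi'
      have hnmi' : ¬ moved (Sum.inl i') := by
        intro hc; exact hc ((hjit i').1 hi')
      rw [hnm _ hnmi'] at hi' ⊢
      have := hCT (Sum.inl i')
      simp only [hq, Sum.elim_inl] at this
      omega
    · intro j' hj'
      have hnmj' : ¬ moved (Sum.inr j') := by
        intro hc
        have : d₂ j' < s' (Sum.inr j') + p₂ j' := (htardy j').2 hc
        omega
      rw [hnm _ hnmj'] at hj' ⊢
      have := hCT (Sum.inr j')
      simp only [hq, Sum.elim_inr] at this
      omega
end
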